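/- Let X be a connected graph of order at least 3. If P_3 □ X is well-dominated, then X is the complete graph K_3. -/

import Mathlib

open SimpleGraph

/-- `S` dominates `G`: every vertex is in `S` or adjacent to a vertex of `S`. -/
def Dominates {V : Type*} (G : SimpleGraph V) (S : Set V) : Prop :=
  ∀ v : V, v ∈ S ∨ ∃ u ∈ S, G.Adj u v

/-- `S` is a minimal dominating set of `G`. -/
def MinDom {V : Type*} (G : SimpleGraph V) (S : Set V) : Prop :=
  Dominates G S ∧ ∀ T : Set V, T ⊂ S → ¬ Dominates G T

/-- `G` is well-dominated: all minimal dominating sets have the same cardinality. -/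
def WellDom {V : Type*} (G : SimpleGraph V) : Prop :=
  ∀ S T : Set V, MinDom G S → MinDom G T → S.ncard = T.ncard

/-- `I` is an independent set of `G`. -/
def IndepSet {V : Type*} (G : SimpleGraph V) (I : Set V) : Prop :=
  ∀ a ∈ I, ∀ b ∈ I, ¬ G.Adj a b

/-- `I` is a maximal independent set of `G`. -/
def MaxIndep {V : Type*} (G : SimpleGraph V) (I : Set V) : Prop :=
  IndepSet G I ∧ ∀ J : Set V, IndepSet G J → I ⊆ J → J = I

/-- The closed neighborhood `N[S]` of a set of vertices. -/
def closedNbhd {V : Type*} (G : SimpleGraph V) (S : Set V) : Set V :=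
  {v | v ∈ S ∨ ∃ u ∈ S, G.Adj u v}

namespace WDaux

variable {V : Type*}

lemma fin3cases : ∀ i : Fin 3, i = 0 ∨ i = 1 ∨ i = 2 := by decide

lemma indep_dom_minDom (G : SimpleGraph V) (S : Set V)
    (h1 : IndepSet G S) (h2 : Dominates G S) : MinDom G S := by
  refine ⟨h2, fun T hT hdom => ?_⟩
  obtain ⟨s, hsS, hsT⟩ := Set.exists_of_ssubset hT
  rcases hdom s with h | ⟨u, huT, hadj⟩
  · exact hsT h
  · exact h1 u (hT.subset huT) s hsS hadj

lemma exists_relmax [Fintype V] (X : SimpleGraph V) (U S : Set V)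
    (hS : IndepSet X S) (hSU : S ⊆ U) :
    ∃ B, IndepSet X B ∧ S ⊆ B ∧ B ⊆ U ∧
      ∀ v ∈ U, v ∈ B ∨ ∃ b ∈ B, X.Adj b v := by
  have hfin : {J : Set V | IndepSet X J ∧ S ⊆ J ∧ J ⊆ U}.Finite := Set.toFinite _
  have hne : {J : Set V | IndepSet X J ∧ S ⊆ J ∧ J ⊆ U}.Nonempty :=
    ⟨S, hS, subset_rfl, hSU⟩
  obtain ⟨B, ⟨hBind, hSB, hBU⟩, hmax⟩ :=
    Set.Finite.exists_maximalFor Set.ncard _ hfin hne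
  refine ⟨B, hBind, hSB, hBU, fun v hvU => ?_⟩
  by_cases hvB : v ∈ B
  · exact Or.inl hvB
  by_cases hadj : ∃ b ∈ B, X.Adj b v
  · exact Or.inr hadj
  exfalso
  push_neg at hadj
  have hind : IndepSet X (insert v B) := by
    intro a ha b hb
    rcases ha with rfl | ha
    · rcases hb with rfl | hb
      · exact X.irrefl
      · exact fun h => hadj b hb (X.adj_symm h)
    · rcases hb with rfl | hb
      · exact hadj a ha
      · exact hBind a ha b hb
  have h1 : insert v B ∈ {J : Set V | IndepSet X J ∧ S ⊆ J ∧ J ⊆ U} :=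
    ⟨hind, hSB.trans (Set.subset_insert _ _), Set.insert_subset hvU hBU⟩
  have h2 := hmax h1 (Set.ncard_le_ncard (Set.subset_insert _ _) (Set.toFinite _))
  rw [Set.ncard_insert_of_notMem hvB] at h2
  omega

lemma exists_maxIndep [Fintype V] (X : SimpleGraph V) (S : Set V) (hS : IndepSet X S) :
    ∃ I, MaxIndep X I ∧ S ⊆ I := by
  obtain ⟨B, h1, h2, _, h4⟩ := exists_relmax X Set.univ S hS (Set.subset_univ S)
  refine ⟨B, ⟨h1, fun J hJ hBJ => ?_⟩, h2⟩
  by_contra hne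
  obtain ⟨v, hvJ, hvB⟩ := Set.not_subset.mp
    (fun hsub => hne (Set.Subset.antisymm hsub hBJ))
  rcases h4 v trivial with h | ⟨b, hbB, hadj⟩
  · exact hvB h
  · exact hJ b (hBJ hbB) v hvJ hadj

lemma maxIndep_dominates (X : SimpleGraph V) (I : Set V) (hI : MaxIndep X I) :
    Dominates X I := by
  intro v
  by_cases hv : v ∈ I
  · exact Or.inl hv
  by_cases hadj : ∃ u ∈ I, X.Adj u v
  · exact Or.inr hadj
  exfalso
  push_neg at hadj
  have hind : IndepSet X (insert v I) := by
    intro a ha b hb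
    rcases ha with rfl | ha
    · rcases hb with rfl | hb
      · exact X.irrefl
      · exact fun h => hadj b hb (X.adj_symm h)
    · rcases hb with rfl | hb
      · exact hadj a ha
      · exact hI.1 a ha b hb
  have := hI.2 _ hind (Set.subset_insert _ _)
  exact hv (this ▸ Set.mem_insert v I)

def Lyr (i : Fin 3) (S : Set V) : Set (Fin 3 × V) := (fun v => (i, v)) '' S

lemma mem_Lyr {i j : Fin 3} {v : V} {S : Set V} : (j, v) ∈ Lyr i S ↔ j = i ∧ v ∈ S := by
  constructor
  · rintro ⟨w, hw, heq⟩
    obtain ⟨h1, h2⟩ := Prod.mk.injEq _ _ _ _ ▸ heq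
    exact ⟨h1.symm, h2 ▸ hw⟩
  · rintro ⟨rfl, hv⟩; exact ⟨v, hv, rfl⟩

lemma ncard_Lyr (i : Fin 3) (S : Set V) : (Lyr i S).ncard = S.ncard :=
  Set.ncard_image_of_injective S (fun a b h => congrArg Prod.snd h)

def Tri (A B C : Set V) : Set (Fin 3 × V) := Lyr 0 A ∪ Lyr 1 B ∪ Lyr 2 C

lemma mem_Tri {p : Fin 3 × V} {A B C : Set V} :
    p ∈ Tri A B C ↔ (p.1 = 0 ∧ p.2 ∈ A) ∨ (p.1 = 1 ∧ p.2 ∈ B) ∨ (p.1 = 2 ∧ p.2 ∈ C) := by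
  obtain ⟨j, v⟩ := p
  simp only [Tri, Set.mem_union, mem_Lyr]
  tauto

lemma ncard_Tri [Fintype V] (A B C : Set V) :
    (Tri A B C).ncard = A.ncard + B.ncard + C.ncard := by
  have d01 : Disjoint (Lyr (0 : Fin 3) A) (Lyr 1 B) := by
    rw [Set.disjoint_left]
    rintro ⟨j, v⟩ h1 h2
    rw [mem_Lyr] at h1 h2
    obtain ⟨rfl, -⟩ := h1
    exact absurd h2.1 (by decide)
  have d02 : Disjoint (Lyr (0 : Fin 3) A ∪ Lyr 1 B) (Lyr 2 C) := by
    rw [Set.disjoint_left]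
    rintro ⟨j, v⟩ h1 h2
    rw [mem_Lyr] at h2
    obtain ⟨rfl, -⟩ := h2
    rcases h1 with h1 | h1 <;> rw [mem_Lyr] at h1 <;> exact absurd h1.1 (by decide)
  rw [Tri, Set.ncard_union_eq d02 (Set.toFinite _) (Set.toFinite _),
    Set.ncard_union_eq d01 (Set.toFinite _) (Set.toFinite _),
    ncard_Lyr, ncard_Lyr, ncard_Lyr]

lemma prodAdj (X : SimpleGraph V) {i j : Fin 3} {u v : V} :
    (pathGraph 3 □ X).Adj (i, u) (j, v) ↔
      ((i.val + 1 = j.val ∨ j.val + 1 = i.val) ∧ u = v) ∨ (X.Adj u v ∧ i = j) := by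
  rw [boxProd_adj]
  simp only [pathGraph_adj]

end WDaux
namespace WDaux

variable {V : Type*}

lemma triple_minDom [Fintype V] (X : SimpleGraph V) (A B C : Set V)
    (hA : IndepSet X A) (hB : IndepSet X B) (hC : IndepSet X C)
    (hAB : ∀ v, v ∈ A → v ∉ B) (hBC : ∀ v, v ∈ B → v ∉ C)
    (h0 : ∀ v, (v ∈ A ∨ v ∈ B) ∨ ∃ a ∈ A, X.Adj a v)
    (h1 : ∀ v, (v ∈ A ∨ v ∈ B ∨ v ∈ C) ∨ ∃ b ∈ B, X.Adj b v)
    (h2 : ∀ v, (v ∈ B ∨ v ∈ C) ∨ ∃ c ∈ C, X.Adj c v) :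
    MinDom (pathGraph 3 □ X) (Tri A B C) := by
  apply indep_dom_minDom
  · rintro ⟨i, u⟩ hp ⟨j, v⟩ hq hadj
    rw [mem_Tri] at hp hq
    simp only at hp hq
    rw [prodAdj] at hadj
    rcases hadj with ⟨hij, rfl⟩ | ⟨hadj, rfl⟩
    · rcases hp with ⟨rfl, hu⟩ | ⟨rfl, hu⟩ | ⟨rfl, hu⟩ <;>
        rcases hq with ⟨hj, hv⟩ | ⟨hj, hv⟩ | ⟨hj, hv⟩ <;> subst hj <;>
        first
          | exact absurd hij (by decide)
          | exact hAB _ hu hv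
          | exact hAB _ hv hu
          | exact hBC _ hu hv
          | exact hBC _ hv hu
    · rcases hp with ⟨rfl, hu⟩ | ⟨rfl, hu⟩ | ⟨rfl, hu⟩ <;>
        rcases hq with ⟨hj, hv⟩ | ⟨hj, hv⟩ | ⟨hj, hv⟩ <;>
        first
          | exact absurd hj (by decide)
          | exact hA _ hu _ hv hadj
          | exact hB _ hu _ hv hadj
          | exact hC _ hu _ hv hadj
  · rintro ⟨i, v⟩
    rcases fin3cases i with rfl | rfl | rfl
    · rcases h0 v with (h | h) | ⟨a, ha, hadj⟩
      · exact Or.inl (mem_Tri.mpr (Or.inl ⟨rfl, h⟩))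
      · refine Or.inr ⟨(1, v), mem_Tri.mpr (Or.inr (Or.inl ⟨rfl, h⟩)), ?_⟩
        rw [prodAdj]; exact Or.inl ⟨Or.inr (by decide), rfl⟩
      · refine Or.inr ⟨(0, a), mem_Tri.mpr (Or.inl ⟨rfl, ha⟩), ?_⟩
        rw [prodAdj]; exact Or.inr ⟨hadj, rfl⟩
    · rcases h1 v with (h | h | h) | ⟨b, hb, hadj⟩
      · refine Or.inr ⟨(0, v), mem_Tri.mpr (Or.inl ⟨rfl, h⟩), ?_⟩
        rw [prodAdj]; exact Or.inl ⟨Or.inl (by decide), rfl⟩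
      · exact Or.inl (mem_Tri.mpr (Or.inr (Or.inl ⟨rfl, h⟩)))
      · refine Or.inr ⟨(2, v), mem_Tri.mpr (Or.inr (Or.inr ⟨rfl, h⟩)), ?_⟩
        rw [prodAdj]; exact Or.inl ⟨Or.inr (by decide), rfl⟩
      · refine Or.inr ⟨(1, b), mem_Tri.mpr (Or.inr (Or.inl ⟨rfl, hb⟩)), ?_⟩
        rw [prodAdj]; exact Or.inr ⟨hadj, rfl⟩
    · rcases h2 v with (h | h) | ⟨c, hc, hadj⟩
      · refine Or.inr ⟨(1, v), mem_Tri.mpr (Or.inr (Or.inl ⟨rfl, h⟩)), ?_⟩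
        rw [prodAdj]; exact Or.inl ⟨Or.inl (by decide), rfl⟩
      · exact Or.inl (mem_Tri.mpr (Or.inr (Or.inr ⟨rfl, h⟩)))
      · refine Or.inr ⟨(2, c), mem_Tri.mpr (Or.inr (Or.inr ⟨rfl, hc⟩)), ?_⟩
        rw [prodAdj]; exact Or.inr ⟨hadj, rfl⟩

lemma T3_minDom [Fintype V] (X : SimpleGraph V) (I : Set V)
    (hI : MaxIndep X I) (hnbr : ∀ v : V, ∃ u, X.Adj v u) :
    MinDom (pathGraph 3 □ X) (Tri I ∅ Iᶜ) := by
  constructor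
  · rintro ⟨i, v⟩
    rcases fin3cases i with rfl | rfl | rfl
    · rcases maxIndep_dominates X I hI v with h | ⟨u, hu, hadj⟩
      · exact Or.inl (mem_Tri.mpr (Or.inl ⟨rfl, h⟩))
      · refine Or.inr ⟨(0, u), mem_Tri.mpr (Or.inl ⟨rfl, hu⟩), ?_⟩
        rw [prodAdj]; exact Or.inr ⟨hadj, rfl⟩
    · by_cases h : v ∈ I
      · refine Or.inr ⟨(0, v), mem_Tri.mpr (Or.inl ⟨rfl, h⟩), ?_⟩
        rw [prodAdj]; exact Or.inl ⟨Or.inl (by decide), rfl⟩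
      · refine Or.inr ⟨(2, v), mem_Tri.mpr (Or.inr (Or.inr ⟨rfl, h⟩)), ?_⟩
        rw [prodAdj]; exact Or.inl ⟨Or.inr (by decide), rfl⟩
    · by_cases h : v ∈ I
      · obtain ⟨u, hadj⟩ := hnbr v
        have hu : u ∉ I := fun huI => hI.1 v h u huI hadj
        refine Or.inr ⟨(2, u), mem_Tri.mpr (Or.inr (Or.inr ⟨rfl, hu⟩)), ?_⟩
        rw [prodAdj]; exact Or.inr ⟨X.adj_symm hadj, rfl⟩
      · exact Or.inl (mem_Tri.mpr (Or.inr (Or.inr ⟨rfl, h⟩)))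
  · intro T hT hdom
    obtain ⟨s, hsS, hsT⟩ := Set.exists_of_ssubset hT
    obtain ⟨i, x⟩ := s
    have hmid : ∀ y : V, ((1 : Fin 3), y) ∉ Tri I (∅ : Set V) Iᶜ := by
      intro y hy
      rcases mem_Tri.mp hy with ⟨h, -⟩ | ⟨-, h⟩ | ⟨h, -⟩
      · exact (by decide : (1 : Fin 3) ≠ 0) h
      · exact h
      · exact (by decide : (1 : Fin 3) ≠ 2) h
    rcases mem_Tri.mp hsS with ⟨hi, hx⟩ | ⟨-, hx⟩ | ⟨hi, hx⟩
    · simp only at hi hx; subst hi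
      rcases hdom (1, x) with hmem | ⟨⟨j, y⟩, hyT, hadj⟩
      · exact hmid x (hT.subset hmem)
      · rw [prodAdj] at hadj
        rcases hadj with ⟨hij, rfl⟩ | ⟨-, hj1⟩
        · have hyS := hT.subset hyT
          rcases mem_Tri.mp hyS with ⟨hj, hyI⟩ | ⟨-, h⟩ | ⟨hj, hyI⟩
          · simp only at hj hyI; subst hj; exact hsT hyT
          · exact h
          · simp only at hj hyI; subst hj; exact hyI hx
        · exact hmid y (hj1 ▸ hT.subset hyT)
    · exact hx.elim
    · simp only at hi hx; subst hi
      rcases hdom (1, x) with hmem | ⟨⟨j, y⟩, hyT, hadj⟩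
      · exact hmid x (hT.subset hmem)
      · rw [prodAdj] at hadj
        rcases hadj with ⟨hij, rfl⟩ | ⟨-, hj1⟩
        · have hyS := hT.subset hyT
          rcases mem_Tri.mp hyS with ⟨hj, hyI⟩ | ⟨-, h⟩ | ⟨hj, hyI⟩
          · simp only at hj hyI; subst hj; exact hx hyI
          · exact h
          · simp only at hj hyI; subst hj; exact hsT hyT
        · exact hmid y (hj1 ▸ hT.subset hyT)

lemma ncard_T3 [Fintype V] (I : Set V) :
    (Tri I (∅ : Set V) Iᶜ).ncard = Fintype.card V := by
  rw [ncard_Tri, Set.ncard_empty, ← Nat.card_eq_fintype_card,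
    ← Set.ncard_add_ncard_compl I]
  omega

end WDaux
namespace WDaux

variable {V : Type*} [Fintype V] {X : SimpleGraph V}

lemma exists_nbr (hconn : X.Connected) (hcard : 3 ≤ Fintype.card V) (v : V) :
    ∃ u, X.Adj v u := by
  obtain ⟨w, hw⟩ := Fintype.exists_ne_of_one_lt_card (by omega) v
  obtain ⟨p⟩ := hconn.preconnected v w
  cases p with
  | nil => exact absurd rfl hw.symm
  | cons h q => exact ⟨_, h⟩

lemma card_maxIndep (hconn : X.Connected) (hcard : 3 ≤ Fintype.card V)
    (hwd : WellDom (pathGraph 3 □ X)) (I : Set V) (hI : MaxIndep X I) :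
    3 * I.ncard = Fintype.card V := by
  have hnbr := exists_nbr hconn hcard
  have hT3 := T3_minDom X I hI hnbr
  have hIdom := maxIndep_dominates X I hI
  obtain ⟨B, hBind, -, hBU, hBdom⟩ := exists_relmax X Iᶜ ∅
    (fun a ha => ha.elim) (Set.empty_subset _)
  have hT1 : MinDom (pathGraph 3 □ X) (Tri I B I) := by
    refine triple_minDom X I B I hI.1 hBind hI.1
      (fun v hv hvB => hBU hvB hv) (fun v hv => hBU hv) ?_ ?_ ?_
    · intro v
      rcases hIdom v with h | ⟨u, hu, hadj⟩
      · exact Or.inl (Or.inl h)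
      · exact Or.inr ⟨u, hu, hadj⟩
    · intro v
      by_cases hv : v ∈ I
      · exact Or.inl (Or.inl hv)
      · rcases hBdom v hv with h | h
        · exact Or.inl (Or.inr (Or.inl h))
        · exact Or.inr h
    · intro v
      rcases hIdom v with h | ⟨u, hu, hadj⟩
      · exact Or.inl (Or.inr h)
      · exact Or.inr ⟨u, hu, hadj⟩
  have hT2 : MinDom (pathGraph 3 □ X) (Tri B I B) := by
    refine triple_minDom X B I B hBind hI.1 hBind
      (fun v hv => hBU hv) (fun v hv hvB => hBU hvB hv) ?_ ?_ ?_
    · intro v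
      by_cases hv : v ∈ I
      · exact Or.inl (Or.inr hv)
      · rcases hBdom v hv with h | h
        · exact Or.inl (Or.inl h)
        · exact Or.inr h
    · intro v
      rcases hIdom v with h | ⟨u, hu, hadj⟩
      · exact Or.inl (Or.inr (Or.inl h))
      · exact Or.inr ⟨u, hu, hadj⟩
    · intro v
      by_cases hv : v ∈ I
      · exact Or.inl (Or.inl hv)
      · rcases hBdom v hv with h | h
        · exact Or.inl (Or.inr h)
        · exact Or.inr h
  have e1 := hwd _ _ hT1 hT3
  have e2 := hwd _ _ hT2 hT3
  rw [ncard_Tri, ncard_T3] at e1 e2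
  omega

lemma indep_le (hconn : X.Connected) (hcard : 3 ≤ Fintype.card V)
    (hwd : WellDom (pathGraph 3 □ X)) (S : Set V) (hS : IndepSet X S) :
    3 * S.ncard ≤ Fintype.card V := by
  obtain ⟨I, hI, hSI⟩ := exists_maxIndep X S hS
  have := card_maxIndep hconn hcard hwd I hI
  have hle := Set.ncard_le_ncard hSI (Set.toFinite _)
  omega

lemma indep_max (hconn : X.Connected) (hcard : 3 ≤ Fintype.card V)
    (hwd : WellDom (pathGraph 3 □ X)) (S : Set V) (hS : IndepSet X S)
    (h3 : 3 * S.ncard = Fintype.card V) : MaxIndep X S := by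
  refine ⟨hS, fun J hJ hSJ => ?_⟩
  have := indep_le hconn hcard hwd J hJ
  exact (Set.eq_of_subset_of_ncard_le hSJ (by omega) (Set.toFinite _)).symm

/-- The private set of `v` w.r.t. `I`: vertices not in the closed nbhd of `I \ {v}`. -/
def Pset (X : SimpleGraph V) (I : Set V) (v : V) : Set V :=
  {z | z ∉ I \ {v} ∧ ∀ u ∈ I \ {v}, ¬ X.Adj u z}

lemma self_mem_Pset (hI : IndepSet X I) {v : V} (hv : v ∈ I) : v ∈ Pset X I v :=
  ⟨fun h => h.2 rfl, fun u hu => hI u hu.1 v hv⟩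

lemma Pset_shape (hI : MaxIndep X I) {v z : V} (hv : v ∈ I) (hz : z ∈ Pset X I v) :
    z = v ∨ (X.Adj v z ∧ z ∉ I) := by
  rcases maxIndep_dominates X I hI z with hzI | ⟨u, huI, hadj⟩
  · left
    by_contra hne
    exact hz.1 ⟨hzI, hne⟩
  · have huv : u = v := by
      by_contra hne
      exact hz.2 u ⟨huI, hne⟩ hadj
    rw [huv] at hadj
    right
    refine ⟨hadj, fun hzI => ?_⟩
    have hzv : z ≠ v := fun h => X.irrefl (h ▸ hadj)
    exact hz.1 ⟨hzI, hzv⟩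

lemma Pset_swap (hconn : X.Connected) (hcard : 3 ≤ Fintype.card V)
    (hwd : WellDom (pathGraph 3 □ X)) {I : Set V} (hI : MaxIndep X I) {v z : V}
    (hv : v ∈ I) (hz : z ∈ Pset X I v) (hzv : z ≠ v) :
    MaxIndep X (insert z (I \ {v})) := by
  have hind : IndepSet X (insert z (I \ {v})) := by
    intro a ha b hb
    rcases ha with rfl | ha
    · rcases hb with rfl | hb
      · exact X.irrefl
      · exact fun h => hz.2 b hb (X.adj_symm h)
    · rcases hb with rfl | hb
      · exact hz.2 a ha
      · exact hI.1 a ha.1 b hb.1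
  refine indep_max hconn hcard hwd _ hind ?_
  rw [Set.ncard_insert_of_notMem hz.1 (Set.toFinite _)]
  rw [Set.ncard_diff_singleton_add_one hv (Set.toFinite _)]
  exact card_maxIndep hconn hcard hwd I hI

lemma Pset_clique (hconn : X.Connected) (hcard : 3 ≤ Fintype.card V)
    (hwd : WellDom (pathGraph 3 □ X)) {I : Set V} (hI : MaxIndep X I) {v z z' : V}
    (hv : v ∈ I) (hz : z ∈ Pset X I v) (hz' : z' ∈ Pset X I v) (hne : z ≠ z') :
    X.Adj z z' := by
  by_cases hzv : z = v
  · subst hzv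
    rcases Pset_shape hI hv hz' with h | h
    · exact absurd h.symm hne
    · exact h.1
  by_cases hz'v : z' = v
  · subst hz'v
    rcases Pset_shape hI hv hz with h | h
    · exact absurd h hne
    · exact X.adj_symm h.1
  by_contra hnadj
  have hIz := Pset_swap hconn hcard hwd hI hv hz hzv
  have hind : IndepSet X (insert z' (insert z (I \ {v}))) := by
    intro a ha b hb
    rcases ha with rfl | rfl | ha
    · rcases hb with rfl | rfl | hb
      · exact X.irrefl
      · exact fun h => hnadj (X.adj_symm h)
      · exact fun h => hz'.2 b hb (X.adj_symm h)
    · rcases hb with rfl | rfl | hb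
      · exact hnadj
      · exact X.irrefl
      · exact fun h => hz.2 b hb (X.adj_symm h)
    · rcases hb with rfl | rfl | hb
      · exact hz'.2 a ha
      · exact hz.2 a ha
      · exact hI.1 a ha.1 b hb.1
  have hle := indep_le hconn hcard hwd _ hind
  have hz'nm : z' ∉ insert z (I \ {v}) := by
    intro h
    rcases h with h | h
    · exact hne h.symm
    · exact hz'.1 h
  rw [Set.ncard_insert_of_notMem hz'nm (Set.toFinite _),
    Set.ncard_insert_of_notMem hz.1 (Set.toFinite _),
    Set.ncard_diff_singleton_add_one hv (Set.toFinite _)] at hle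
  have := card_maxIndep hconn hcard hwd I hI
  omega

lemma Pset_disj (hI : MaxIndep X I) {u v z : V} (hu : u ∈ I) (hv : v ∈ I)
    (hne : u ≠ v) (hzv : z ∈ Pset X I v) (hzu : z ∈ Pset X I u) : False := by
  rcases maxIndep_dominates X I hI z with hzI | ⟨w, hwI, hadj⟩
  · have h1 : z = v := by
      by_contra h; exact hzv.1 ⟨hzI, h⟩
    have h2 : z = u := by
      by_contra h; exact hzu.1 ⟨hzI, h⟩
    exact hne (h2 ▸ h1 ▸ rfl)
  · have h1 : w = v := by
      by_contra h; exact hzv.2 w ⟨hwI, h⟩ hadj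
    have h2 : w = u := by
      by_contra h; exact hzu.2 w ⟨hwI, h⟩ hadj
    exact hne (h2 ▸ h1 ▸ rfl)

end WDaux
namespace WDaux

variable {V : Type*} [Fintype V] {X : SimpleGraph V}

lemma badAll (hconn : X.Connected) (hcard : 3 ≤ Fintype.card V)
    (hwd : WellDom (pathGraph 3 □ X)) (I : Set V) (v : V)
    (hI : MaxIndep X I) (hv : v ∈ I) :
    ∃ x y, x ∈ Pset X I v ∧ y ∈ Pset X I v ∧ x ≠ v ∧ y ≠ v ∧ X.Adj x y := by
  by_contra hno
  push_neg at hno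
  -- hno : ∀ x y, x ∈ P → y ∈ P → x ≠ v → y ≠ v → ¬ Adj x y
  have hBind : IndepSet X (I \ {v}) := fun a ha b hb => hI.1 a ha.1 b hb.1
  have hSind : IndepSet X (Pset X I v \ {v}) := by
    intro a ha b hb
    exact hno a b ha.1 hb.1 ha.2 hb.2
  have hSsub : Pset X I v \ {v} ⊆ (I \ {v})ᶜ := fun z hz => hz.1.1
  have hvsub : ({v} : Set V) ⊆ (I \ {v})ᶜ := by
    rintro z rfl
    exact fun h => h.2 rfl
  have hvind : IndepSet X ({v} : Set V) := by
    rintro a rfl b rfl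
    exact X.irrefl
  obtain ⟨A, hAind, hvA, hAsub, hAdom⟩ := exists_relmax X (I \ {v})ᶜ {v} hvind hvsub
  obtain ⟨C, hCind, hSC, hCsub, hCdom⟩ := exists_relmax X (I \ {v})ᶜ _ hSind hSsub
  have hT4 : MinDom (pathGraph 3 □ X) (Tri A (I \ {v}) C) := by
    refine triple_minDom X A (I \ {v}) C hAind hBind hCind
      (fun z hz => hAsub hz) (fun z hz hzC => hCsub hzC hz) ?_ ?_ ?_
    · intro z
      by_cases hzB : z ∈ I \ {v}
      · exact Or.inl (Or.inr hzB)
      · rcases hAdom z hzB with h | h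
        · exact Or.inl (Or.inl h)
        · exact Or.inr h
    · intro z
      by_cases hzB : z ∈ I \ {v}
      · exact Or.inl (Or.inr (Or.inl hzB))
      by_cases hzadj : ∃ u ∈ I \ {v}, X.Adj u z
      · obtain ⟨u, hu, hadj⟩ := hzadj
        exact Or.inr ⟨u, hu, hadj⟩
      · push_neg at hzadj
        have hzP : z ∈ Pset X I v := ⟨hzB, hzadj⟩
        by_cases hzv : z = v
        · exact Or.inl (Or.inl (hzv ▸ hvA rfl))
        · exact Or.inl (Or.inr (Or.inr (hSC ⟨hzP, hzv⟩)))
    · intro z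
      by_cases hzB : z ∈ I \ {v}
      · exact Or.inl (Or.inl hzB)
      · rcases hCdom z hzB with h | h
        · exact Or.inl (Or.inr h)
        · exact Or.inr h
  have hnbr := exists_nbr hconn hcard
  have hT3 := T3_minDom X I hI hnbr
  have e := hwd _ _ hT4 hT3
  rw [ncard_Tri, ncard_T3] at e
  have hA3 := indep_le hconn hcard hwd A hAind
  have hC3 := indep_le hconn hcard hwd C hCind
  have hI3 := card_maxIndep hconn hcard hwd I hI
  have hB1 : (I \ {v}).ncard + 1 = I.ncard :=
    Set.ncard_diff_singleton_add_one hv (Set.toFinite _)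
  omega

lemma Pset_partition (hconn : X.Connected) (hcard : 3 ≤ Fintype.card V)
    (hwd : WellDom (pathGraph 3 □ X)) (I : Set V) (hI : MaxIndep X I) :
    (∀ z : V, ∃ c ∈ I, z ∈ Pset X I c) ∧ (∀ b ∈ I, (Pset X I b).ncard ≤ 3) := by
  classical
  set Ifin : Finset V := (Set.toFinite I).toFinset with hIfin
  have hmemI : ∀ c : V, c ∈ Ifin ↔ c ∈ I := fun c => Set.Finite.mem_toFinset _
  set Q : V → Finset V := fun c => (Set.toFinite (Pset X I c)).toFinset with hQ
  have hmemQ : ∀ c z, z ∈ Q c ↔ z ∈ Pset X I c := fun c z => Set.Finite.mem_toFinset _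
  have hQcard : ∀ c, (Q c).card = (Pset X I c).ncard := by
    intro c
    rw [Set.ncard_eq_toFinset_card']
    congr 1
    ext z
    rw [hmemQ, Set.mem_toFinset]
  have hIcard : Ifin.card = I.ncard := by
    rw [Set.ncard_eq_toFinset_card']
    congr 1
    ext z
    rw [hmemI, Set.mem_toFinset]
  have hdisj : ∀ a ∈ Ifin, ∀ b ∈ Ifin, a ≠ b → Disjoint (Q a) (Q b) := by
    intro a ha b hb hab
    rw [Finset.disjoint_left]
    intro z hza hzb
    exact Pset_disj hI ((hmemI a).mp ha) ((hmemI b).mp hb) hab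
      ((hmemQ b z).mp hzb) ((hmemQ a z).mp hza)
  have hbu := Finset.card_biUnion hdisj
  have hle : (Ifin.biUnion Q).card ≤ Fintype.card V := Finset.card_le_univ _
  have h3le : ∀ c ∈ Ifin, 3 ≤ (Q c).card := by
    intro c hc
    have hcI := (hmemI c).mp hc
    obtain ⟨x, y, hx, hy, hxc, hyc, hxy⟩ := badAll hconn hcard hwd I c hI hcI
    have hsub : ({c, x, y} : Finset V) ⊆ Q c := by
      intro z hz
      rcases Finset.mem_insert.mp hz with rfl | hz
      · exact (hmemQ z z).mpr (self_mem_Pset hI.1 hcI)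
      rcases Finset.mem_insert.mp hz with rfl | hz
      · exact (hmemQ c z).mpr hx
      · rw [Finset.mem_singleton] at hz
        subst hz
        exact (hmemQ c z).mpr hy
    have hcard3 : ({c, x, y} : Finset V).card = 3 := by
      rw [Finset.card_insert_of_notMem, Finset.card_insert_of_notMem,
        Finset.card_singleton]
      · simp only [Finset.mem_singleton]
        exact hxy.ne
      · simp only [Finset.mem_insert, Finset.mem_singleton]
        push_neg
        exact ⟨fun h => hxc h.symm, fun h => hyc h.symm⟩
    calc 3 = ({c, x, y} : Finset V).card := hcard3.symm
    _ ≤ (Q c).card := Finset.card_le_card hsub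
  have hsumlow : 3 * Ifin.card ≤ ∑ c ∈ Ifin, (Q c).card := by
    calc 3 * Ifin.card = ∑ _c ∈ Ifin, 3 := by rw [Finset.sum_const, smul_eq_mul]; ring
    _ ≤ ∑ c ∈ Ifin, (Q c).card := Finset.sum_le_sum h3le
  have hn : 3 * I.ncard = Fintype.card V := card_maxIndep hconn hcard hwd I hI
  have hsum_eq : ∑ c ∈ Ifin, (Q c).card = Fintype.card V := by
    rw [← hbu]
    refine le_antisymm hle ?_
    rw [hbu, ← hn, ← hIcard]
    exact hsumlow
  constructor
  · intro z
    have huniv : Ifin.biUnion Q = Finset.univ := by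
      apply Finset.eq_univ_of_card
      rw [hbu, hsum_eq]
    have : z ∈ Ifin.biUnion Q := huniv ▸ Finset.mem_univ z
    obtain ⟨c, hc, hzc⟩ := Finset.mem_biUnion.mp this
    exact ⟨c, (hmemI c).mp hc, (hmemQ c z).mp hzc⟩
  · intro b hb
    have hbfin : b ∈ Ifin := (hmemI b).mpr hb
    have hsplit := Finset.add_sum_erase Ifin (fun c => (Q c).card) hbfin
    beta_reduce at hsplit
    have herase : 3 * (Ifin.erase b).card ≤ ∑ c ∈ Ifin.erase b, (Q c).card := by
      calc 3 * (Ifin.erase b).card = ∑ _c ∈ Ifin.erase b, 3 := by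
            rw [Finset.sum_const, smul_eq_mul]; ring
      _ ≤ _ := Finset.sum_le_sum (fun c hc => h3le c (Finset.mem_of_mem_erase hc))
    have hec : (Ifin.erase b).card = Ifin.card - 1 := Finset.card_erase_of_mem hbfin
    have hIpos : 1 ≤ Ifin.card := Finset.card_pos.mpr ⟨b, hbfin⟩
    rw [← hQcard b]
    rw [hIcard] at hec hIpos
    omega
  
end WDaux
theorem stmt8 {V : Type*} [Fintype V] (X : SimpleGraph V)
    (hconn : X.Connected) (hcard : 3 ≤ Fintype.card V)
    (hwd : WellDom (SimpleGraph.pathGraph 3 □ X)) :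
    Nonempty (X ≃g completeGraph (Fin 3)) := by
  classical
  obtain ⟨I0, hI0, -⟩ := WDaux.exists_maxIndep X ∅ (fun a ha => ha.elim)
  have h30 := WDaux.card_maxIndep hconn hcard hwd I0 hI0
  by_cases hk : I0.ncard = 1
  · -- X is complete on 3 vertices
    have hn3 : Fintype.card V = 3 := by omega
    have hadj : ∀ u w : V, u ≠ w → X.Adj u w := by
      intro u w hne
      have hsu : IndepSet X {u} := by
        rintro a rfl b rfl
        exact X.irrefl
      obtain ⟨I, hI, huI⟩ := WDaux.exists_maxIndep X {u} hsu
      have h3I := WDaux.card_maxIndep hconn hcard hwd I hI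
      have h1 : I.ncard = 1 := by omega
      obtain ⟨c, hc⟩ := Set.ncard_eq_one.mp h1
      have hu : u ∈ I := huI rfl
      rw [hc] at hu
      rw [Set.mem_singleton_iff] at hu
      subst hu
      by_contra hnadj
      have hind : IndepSet X {u, w} := by
        intro a ha b hb
        rcases ha with rfl | ha
        · rcases hb with rfl | hb
          · exact X.irrefl
          · rw [Set.mem_singleton_iff] at hb; subst hb; exact hnadj
        · rw [Set.mem_singleton_iff] at ha; subst ha
          rcases hb with rfl | hb
          · exact fun hh => hnadj (X.adj_symm hh)
          · rw [Set.mem_singleton_iff] at hb; subst hb; exact X.irrefl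
      have heq := hI.2 {u, w} hind (by rw [hc]; exact fun a ha => Or.inl ha)
      rw [hc] at heq
      have hwmem : w ∈ ({u} : Set V) := heq ▸ (Or.inr rfl : w ∈ ({u, w} : Set V))
      exact hne (Set.mem_singleton_iff.mp hwmem).symm
    have e : V ≃ Fin 3 := Fintype.equivFinOfCardEq hn3
    refine ⟨⟨e, ?_⟩⟩
    intro a b
    simp only [completeGraph_eq_top, top_adj, ne_eq, EmbeddingLike.apply_eq_iff_eq]
    constructor
    · intro h
      exact hadj a b h
    · intro h hab
      exact X.irrefl (hab ▸ h)
  · exfalso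
    have hk1 : 1 ≤ I0.ncard := by omega
    have hk2 : 2 ≤ I0.ncard := by
      rcases Nat.lt_or_ge I0.ncard 2 with h | h
      · omega
      · exact h
    obtain ⟨v0, u0, hv0I, hu0I, hvu⟩ :=
      (Set.one_lt_ncard_iff (Set.toFinite I0)).mp (by omega)
    obtain ⟨hcover, hsize3⟩ := WDaux.Pset_partition hconn hcard hwd I0 hI0
    have hcross : ∃ z w a b, a ∈ I0 ∧ b ∈ I0 ∧ a ≠ b ∧
        z ∈ WDaux.Pset X I0 a ∧ w ∈ WDaux.Pset X I0 b ∧ X.Adj z w := by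
      by_contra hno
      push_neg at hno
      have hwalk : ∀ (x y : V), X.Walk x y →
          x ∈ WDaux.Pset X I0 v0 → y ∈ WDaux.Pset X I0 v0 := by
        intro x y p
        induction p with
        | nil => exact id
        | @cons x' m y' h q ih =>
          intro hx
          apply ih
          obtain ⟨c, hcI, hyc⟩ := hcover m
          by_cases hcv : c = v0
          · exact hcv ▸ hyc
          · exact absurd h (hno x' m v0 c hv0I hcI (fun hh => hcv hh.symm) hx hyc)
      obtain ⟨p⟩ := hconn.preconnected v0 u0
      have hu0 : u0 ∈ WDaux.Pset X I0 v0 :=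
        hwalk _ _ p (WDaux.self_mem_Pset hI0.1 hv0I)
      exact WDaux.Pset_disj hI0 hu0I hv0I hvu.symm hu0
        (WDaux.self_mem_Pset hI0.1 hu0I)
    obtain ⟨z, w, a, b, haI, hbI, hab, hza, hwb, hzw⟩ := hcross
    have hzna : z ≠ a := by
      rintro rfl
      exact hwb.2 z ⟨haI, by simp only [Set.mem_singleton_iff]; exact hab⟩ hzw
    have hwnb : w ≠ b := by
      rintro rfl
      exact hza.2 w ⟨hbI, by simp only [Set.mem_singleton_iff]; exact hab.symm⟩
        (X.adj_symm hzw)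
    have hznI : z ∉ I0 := by
      intro hzI
      rcases WDaux.Pset_shape hI0 haI hza with h | h
      · exact hzna h
      · exact h.2 hzI
    have hI'' := WDaux.Pset_swap hconn hcard hwd hI0 haI hza hzna
    have hbI'' : b ∈ insert z (I0 \ {a}) :=
      Set.mem_insert_iff.mpr (Or.inr ⟨hbI, by
        simp only [Set.mem_singleton_iff]; exact hab.symm⟩)
    obtain ⟨x, y, hx, hy, hxb, hyb, hxy⟩ :=
      WDaux.badAll hconn hcard hwd _ b hI'' hbI''
    have hzb : z ≠ b := fun h => hznI (h ▸ hbI)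
    have hzmem : z ∈ insert z (I0 \ {a}) \ {b} :=
      ⟨Set.mem_insert _ _, by simp only [Set.mem_singleton_iff]; exact hzb⟩
    have hsub : ∀ ζ, ζ ∈ WDaux.Pset X (insert z (I0 \ {a})) b →
        ζ ∈ WDaux.Pset X I0 b ∧ ζ ≠ w := by
      intro ζ hζ
      obtain ⟨c, hcI, hζc⟩ := hcover ζ
      by_cases hca : c = a
      · subst hca
        exfalso
        by_cases hζz : ζ = z
        · exact hζ.1 (hζz ▸ hzmem)
        · exact hζ.2 z hzmem
            (WDaux.Pset_clique hconn hcard hwd hI0 hcI hza hζc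
              (fun h => hζz h.symm))
      · by_cases hcb : c = b
        · subst hcb
          refine ⟨hζc, ?_⟩
          rintro rfl
          exact hζ.2 z hzmem hzw
        · exfalso
          have hcmem : c ∈ insert z (I0 \ {a}) \ {b} :=
            ⟨Set.mem_insert_iff.mpr (Or.inr ⟨hcI, by
              simp only [Set.mem_singleton_iff]; exact hca⟩), by
              simp only [Set.mem_singleton_iff]; exact hcb⟩
          by_cases hζc' : ζ = c
          · exact hζ.1 (hζc' ▸ hcmem)
          · exact hζ.2 c hcmem
              (WDaux.Pset_clique hconn hcard hwd hI0 hcI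
                (WDaux.self_mem_Pset hI0.1 hcI) hζc (fun h => hζc' h.symm))
    have hPb3 := hsize3 b hbI
    have hbP : b ∈ WDaux.Pset X I0 b := WDaux.self_mem_Pset hI0.1 hbI
    obtain ⟨hxP, hxw⟩ := hsub x hx
    obtain ⟨hyP, hyw⟩ := hsub y hy
    have hsubset : ({b, x, y, w} : Set V) ⊆ WDaux.Pset X I0 b := by
      intro t ht
      rcases ht with rfl | rfl | rfl | ht
      · exact hbP
      · exact hxP
      · exact hyP
      · rw [Set.mem_singleton_iff] at ht; subst ht; exact hwb
    have hc4 : ({b, x, y, w} : Set V).ncard = 4 := by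
      rw [Set.ncard_insert_of_notMem (by
          simp only [Set.mem_insert_iff, Set.mem_singleton_iff]
          push_neg
          exact ⟨fun h => hxb h.symm, fun h => hyb h.symm, fun h => hwnb h.symm⟩),
        Set.ncard_insert_of_notMem (by
          simp only [Set.mem_insert_iff, Set.mem_singleton_iff]
          push_neg
          exact ⟨hxy.ne, hxw⟩),
        Set.ncard_insert_of_notMem (by
          simp only [Set.mem_singleton_iff]
          exact hyw),
        Set.ncard_singleton]
    have hle4 := Set.ncard_le_ncard hsubset (Set.toFinite _)
    omega
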